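/- Let (V, ω) be a symplectic vector space of dimension 2n with n > 2, and let 1 ≤ k ≤ n-2. For an alternating 2-form α on V, α ∧ ω^k = 0 if and only if α = 0. -/

import Mathlib

open scoped BigOperators

noncomputable section

/-- The wedge product of a raw `k`-form and a raw `l`-form on a vector space. -/
def wedgeRaw {V : Type*} (k l : ℕ) (α : (Fin k → V) → ℝ) (β : (Fin l → V) → ℝ) :
    (Fin (k + l) → V) → ℝ :=
  fun v => (1 / ((k.factorial : ℝ) * (l.factorial : ℝ))) *
    ∑ σ : Equiv.Perm (Fin (k + l)), ((Equiv.Perm.sign σ : ℤ) : ℝ) *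
      (α (fun i => v (σ (Fin.castAdd l i))) * β (fun i => v (σ (Fin.natAdd k i))))

/-- The `k`-fold wedge power of a raw 2-form. -/
def wpow {V : Type*} (ω : (Fin 2 → V) → ℝ) : (k : ℕ) → (Fin (2 * k) → V) → ℝ
  | 0 => fun _ => 1
  | k + 1 => wedgeRaw (2 * k) 2 (wpow ω k) ω

/-- Reindex a raw form along an equality of arities. -/
def castFormV {V : Type*} {k k' : ℕ} (h : k = k') (α : (Fin k → V) → ℝ) :
    (Fin k' → V) → ℝ :=
  fun v => α (fun i => v (Fin.cast h i))

/-- Interior product (contraction) of a vector with a raw `(k+1)`-form. -/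
def iprodV {V : Type*} {k : ℕ} (X : V) (α : (Fin (k + 1) → V) → ℝ) :
    (Fin k → V) → ℝ :=
  fun v => α (Fin.cons X v)

/-- A (raw, `x`-dependent) differential `k`-form on the model space `E`. -/
abbrev Form (E : Type*) (k : ℕ) := E → (Fin k → E) → ℝ

variable {E : Type*} [NormedAddCommGroup E] [NormedSpace ℝ E]

/-- The exterior derivative of a raw differential `k`-form on the flat space `E`. -/
def extDerivFlat {k : ℕ} (α : Form E k) : Form E (k + 1) :=
  fun x v => ∑ i : Fin (k + 1), (-1 : ℝ) ^ (i : ℕ) *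
    fderiv ℝ (fun y => α y (i.removeNth v)) x (v i)

/-- Interior product of a vector field with a differential `(k+1)`-form. -/
def iprodF {k : ℕ} (X : E → E) (α : Form E (k + 1)) : Form E k :=
  fun x v => α x (Fin.cons (X x) v)

/-- Reindex a differential form along an equality of arities. -/
def castForm {k k' : ℕ} (h : k = k') (α : Form E k) : Form E k' :=
  fun x v => α x (fun i => v (Fin.cast h i))

/-- The Lie derivative of a differential `k`-form along a vector field, on flat space. -/
def lieDeriv {k : ℕ} (X : E → E) (α : Form E k) : Form E k :=
  fun x v => fderiv ℝ (fun y => α y v) x (X x) +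
    ∑ i : Fin k, α x (Function.update v i (fderiv ℝ X x (v i)))

/-- The Lie bracket of vector fields on flat space. -/
def lieBracket (X Y : E → E) : E → E :=
  fun x => fderiv ℝ Y x (X x) - fderiv ℝ X x (Y x)

/-- Pointwise wedge power of a differential 2-form. -/
def wpowF (ω : Form E 2) (k : ℕ) : Form E (2 * k) :=
  fun x => wpow (ω x) k


namespace TFA

open Equiv Equiv.Perm Finset Module



/-- the wreath-type permutation `(i, b) ↦ (τ i, b + ε i)`. -/
def flipPerm {m : ℕ} (τ : Equiv.Perm (Fin m)) (ε : Fin m → Fin 2) :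
    Equiv.Perm (Fin m × Fin 2) where
  toFun x := (τ x.1, x.2 + ε x.1)
  invFun y := (τ.symm y.1, y.2 + ε (τ.symm y.1))
  left_inv := by
    rintro ⟨i, b⟩
    have h2 : ∀ a c : Fin 2, a + c + c = a := by decide
    simp [h2]
  right_inv := by
    rintro ⟨i, b⟩
    have h2 : ∀ a c : Fin 2, a + c + c = a := by decide
    simp [h2]

@[simp] lemma flipPerm_apply {m : ℕ} (τ : Equiv.Perm (Fin m)) (ε : Fin m → Fin 2)
    (x : Fin m × Fin 2) : flipPerm τ ε x = (τ x.1, x.2 + ε x.1) := rfl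

lemma sign_prodCongr_refl {m : ℕ} (τ : Equiv.Perm (Fin m)) :
    Equiv.Perm.sign ((τ.prodCongr (Equiv.refl (Fin 2))) : Equiv.Perm (Fin m × Fin 2)) = 1 := by
  refine Equiv.Perm.swap_induction_on τ ?_ ?_
  · have : ((1 : Equiv.Perm (Fin m)).prodCongr (Equiv.refl (Fin 2))) = 1 := by
      ext x <;> rfl
    rw [this]; simp
  · intro f x y hxy ih
    have hmul : ((Equiv.swap x y * f).prodCongr (Equiv.refl (Fin 2)))
        = ((Equiv.swap x y).prodCongr (Equiv.refl (Fin 2))) * (f.prodCongr (Equiv.refl (Fin 2))) := by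
      ext z <;> rfl
    have hswap : ((Equiv.swap x y).prodCongr (Equiv.refl (Fin 2)))
        = Equiv.swap (x, (0:Fin 2)) (y, 0) * Equiv.swap (x, (1:Fin 2)) (y, 1) := by
      apply Equiv.ext
      rintro ⟨a, b⟩
      rcases eq_or_ne a x with rfl | hax
      · fin_cases b <;>
          simp [Equiv.swap_apply_of_ne_of_ne, Prod.ext_iff, hxy,
            Equiv.swap_apply_left, Equiv.swap_apply_right, Equiv.Perm.mul_apply] <;>
          simp [Equiv.swap_apply_of_ne_of_ne, Prod.ext_iff, hxy]
      · rcases eq_or_ne a y with rfl | hay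
        · fin_cases b <;>
            simp [Equiv.swap_apply_of_ne_of_ne, Prod.ext_iff, hxy.symm, Equiv.Perm.mul_apply] <;>
            simp [Equiv.swap_apply_of_ne_of_ne, Prod.ext_iff, hxy.symm]
        · fin_cases b <;>
            simp [Equiv.swap_apply_of_ne_of_ne, Prod.ext_iff, hax, hay, Equiv.Perm.mul_apply,
              Equiv.swap_apply_of_ne_of_ne]
    rw [hmul, map_mul, hswap, map_mul, ih]
    rw [Equiv.Perm.sign_swap (by simp [Prod.ext_iff, hxy]),
      Equiv.Perm.sign_swap (by simp [Prod.ext_iff, hxy])]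
    simp

lemma flipPerm_indicator_insert {m : ℕ} (τ : Equiv.Perm (Fin m)) (S : Finset (Fin m))
    (a : Fin m) (ha : a ∉ S) :
    flipPerm τ (fun i => if i ∈ insert a S then 1 else 0)
      = Equiv.swap (τ a, (0:Fin 2)) (τ a, 1) * flipPerm τ (fun i => if i ∈ S then 1 else 0) := by
  apply Equiv.ext
  rintro ⟨i, b⟩
  rcases eq_or_ne i a with rfl | hia
  · have : i ∉ S := ha
    fin_cases b <;>
      simp [Equiv.Perm.mul_apply, this, Equiv.swap_apply_left, Equiv.swap_apply_right]
  · have hne : τ i ≠ τ a := fun h => hia (τ.injective h)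
    by_cases hiS : i ∈ S <;>
      simp [Equiv.Perm.mul_apply, hia, hiS, Equiv.swap_apply_of_ne_of_ne, Prod.ext_iff, hne]

lemma sign_flipPerm_indicator {m : ℕ} (S : Finset (Fin m)) (τ : Equiv.Perm (Fin m)) :
    Equiv.Perm.sign (flipPerm τ (fun i => if i ∈ S then 1 else 0)) = (-1) ^ S.card := by
  induction S using Finset.induction_on with
  | empty =>
    have : flipPerm τ (fun i => if i ∈ (∅ : Finset (Fin m)) then 1 else 0)
        = (τ.prodCongr (Equiv.refl (Fin 2))) := by
      apply Equiv.ext; rintro ⟨i, b⟩; simp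
    rw [this, sign_prodCongr_refl]; simp
  | @insert a S ha ih =>
    rw [flipPerm_indicator_insert τ S a ha, map_mul, ih,
      Equiv.Perm.sign_swap (by simp [Prod.ext_iff]), Finset.card_insert_of_notMem ha, pow_succ]
    exact (mul_comm _ _)

lemma sign_flipPerm {m : ℕ} (τ : Equiv.Perm (Fin m)) (ε : Fin m → Fin 2) :
    Equiv.Perm.sign (flipPerm τ ε) = (-1) ^ (Finset.univ.filter (fun i => ε i = 1)).card := by
  have hε : ε = fun i => if i ∈ Finset.univ.filter (fun i => ε i = 1) then 1 else 0 := by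
    funext i
    rcases (show ε i = 0 ∨ ε i = 1 by omega) with h | h <;> simp [h]
  conv_lhs => rw [hε]
  exact sign_flipPerm_indicator _ τ

lemma flipPerm_injective {m : ℕ} :
    Function.Injective (fun te : Equiv.Perm (Fin m) × (Fin m → Fin 2) =>
      flipPerm te.1 te.2) := by
  rintro ⟨τ, ε⟩ ⟨τ', ε'⟩ h
  have h' : ∀ i : Fin m, (τ i, (0:Fin 2) + ε i) = (τ' i, (0:Fin 2) + ε' i) := by
    intro i
    have := congrArg (fun ψ : Equiv.Perm (Fin m × Fin 2) => ψ (i, 0)) h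
    simpa using this
  simp only [Prod.mk.injEq, zero_add] at h'
  have : τ = τ' := Equiv.ext fun i => (h' i).1
  have : ε = ε' := funext fun i => (h' i).2
  aesop

/-- classification of permutations preserving first-component blocks -/
lemma flipPerm_classify {m : ℕ} (ψ : Equiv.Perm (Fin m × Fin 2))
    (hfst : ∀ j : Fin m, (ψ (j, 0)).1 = (ψ (j, 1)).1) :
    ∃ τ ε, ψ = flipPerm τ ε := by
  have hsnd : ∀ j : Fin m, (ψ (j, 1)).2 = (ψ (j, 0)).2 + 1 := by
    intro j
    have hne : ψ (j, 0) ≠ ψ (j, 1) := by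
      intro h
      have h2 := ψ.injective h
      simp [Prod.ext_iff] at h2
    have : (ψ (j, 0)).2 ≠ (ψ (j, 1)).2 := by
      intro h
      exact hne (Prod.ext (hfst j) h)
    omega
  set τ₀ : Fin m → Fin m := fun j => (ψ (j, 0)).1 with hτ₀
  have hblock : ∀ (j : Fin m) (b : Fin 2), (ψ (j, b)).1 = τ₀ j := by
    intro j b
    fin_cases b
    · rfl
    · exact (hfst j).symm
  have hinj : Function.Injective τ₀ := by
    intro i j hij
    by_contra hne
    -- ψ (i,0), ψ (i,1), ψ (j,0), ψ (j,1) all have fst = τ₀ i, snd covering Fin 2 twice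
    have hc : ∀ b : Fin 2, ∃ b', (ψ (i, b')).2 = (ψ (j, b)).2 := by
      intro b
      rcases (show (ψ (j,b)).2 = (ψ (i,0)).2 ∨ (ψ (j,b)).2 = (ψ (i,0)).2 + 1 by omega) with h | h
      · exact ⟨0, h.symm⟩
      · exact ⟨1, by rw [hsnd i, h]⟩
    obtain ⟨b', hb'⟩ := hc 0
    have : ψ (i, b') = ψ (j, 0) := by
      apply Prod.ext
      · rw [hblock i b', hblock j 0, hij]
      · exact hb'
    have := ψ.injective this
    simp [Prod.ext_iff] at this
    exact hne this.1
  refine ⟨Equiv.ofBijective τ₀ (Finite.injective_iff_bijective.1 hinj),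
    fun j => (ψ (j, 0)).2, ?_⟩
  apply Equiv.ext
  rintro ⟨j, b⟩
  rcases (show b = 0 ∨ b = 1 by omega) with rfl | rfl
  · apply Prod.ext
    · simpa using (hblock j 0)
    · simp
  · apply Prod.ext
    · simpa using (hblock j 1)
    · simp only [flipPerm_apply]
      rw [hsnd j]
      exact add_comm _ _


lemma neg_one_sq_pow (c : ℕ) : (-1 : ℝ) ^ c * (-1) ^ c = 1 := by
  rw [← pow_add]
  exact Even.neg_one_pow ⟨c, by ring⟩

lemma sum_pairs {m : ℕ} (M : Fin m × Fin 2 → Fin m × Fin 2 → ℝ)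
    (h01 : ∀ i, M (i, 0) (i, 1) = 1) (h10 : ∀ i, M (i, 1) (i, 0) = -1)
    (hoff : ∀ x y, x.1 ≠ y.1 → M x y = 0) :
    ∑ ψ : Equiv.Perm (Fin m × Fin 2),
        ((Equiv.Perm.sign ψ : ℤ) : ℝ) * ∏ i : Fin m, M (ψ (i, 0)) (ψ (i, 1))
      = 2 ^ m * (m.factorial : ℝ) := by
  classical
  set F : Equiv.Perm (Fin m × Fin 2) → ℝ := fun ψ =>
    ((Equiv.Perm.sign ψ : ℤ) : ℝ) * ∏ i : Fin m, M (ψ (i, 0)) (ψ (i, 1)) with hF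
  have e11 : (1 + 1 : Fin 2) = 0 := rfl
  have hval : ∀ (τ : Equiv.Perm (Fin m)) (ε : Fin m → Fin 2), F (flipPerm τ ε) = 1 := by
    intro τ ε
    have hprod : ∏ i : Fin m, M (flipPerm τ ε (i, 0)) (flipPerm τ ε (i, 1))
        = ∏ i : Fin m, (if ε i = 1 then (-1 : ℝ) else 1) := by
      apply Finset.prod_congr rfl
      intro i _
      rcases (show ε i = 0 ∨ ε i = 1 by omega) with h | h
      · simp [h, h01]
      · simp [h, e11, h10]
    rw [hF]
    simp only []
    rw [hprod, sign_flipPerm, Finset.prod_ite, Finset.prod_const, Finset.prod_const, one_pow,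
      mul_one]
    push_cast
    exact neg_one_sq_pow _
  have himg : ∑ te : Equiv.Perm (Fin m) × (Fin m → Fin 2), F (flipPerm te.1 te.2)
      = ∑ ψ ∈ Finset.image (fun te : Equiv.Perm (Fin m) × (Fin m → Fin 2) =>
          flipPerm te.1 te.2) Finset.univ, F ψ :=
    (Finset.sum_image (fun a _ b _ h => flipPerm_injective h)).symm
  have hall : ∑ ψ ∈ Finset.image (fun te : Equiv.Perm (Fin m) × (Fin m → Fin 2) =>
      flipPerm te.1 te.2) Finset.univ, F ψ = ∑ ψ : Equiv.Perm (Fin m × Fin 2), F ψ := by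
    apply Finset.sum_subset (Finset.subset_univ _)
    intro ψ _ hψ
    by_contra h0
    have hprod_ne : ∏ i : Fin m, M (ψ (i, 0)) (ψ (i, 1)) ≠ 0 := by
      intro h
      exact h0 (by rw [hF]; simp [h])
    have hfst : ∀ j : Fin m, (ψ (j, 0)).1 = (ψ (j, 1)).1 := by
      intro j
      by_contra hne
      exact (Finset.prod_ne_zero_iff.1 hprod_ne j (Finset.mem_univ j)) (hoff _ _ hne)
    obtain ⟨τ, ε, rfl⟩ := flipPerm_classify ψ hfst
    exact hψ (Finset.mem_image.2 ⟨(τ, ε), Finset.mem_univ _, rfl⟩)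
  calc ∑ ψ : Equiv.Perm (Fin m × Fin 2), F ψ
      = ∑ te : Equiv.Perm (Fin m) × (Fin m → Fin 2), F (flipPerm te.1 te.2) := by
        rw [himg, hall]
    _ = ∑ _te : Equiv.Perm (Fin m) × (Fin m → Fin 2), (1 : ℝ) := by
        apply Finset.sum_congr rfl; intro te _; exact hval te.1 te.2
    _ = 2 ^ m * (m.factorial : ℝ) := by
        rw [Finset.sum_const]
        simp [Fintype.card_prod, Fintype.card_perm, Fintype.card_fun]
        ring

lemma fin2_cover {b₀ b₁ : Fin 2} (h : b₀ ≠ b₁) (b : Fin 2) : b = b₀ ∨ b = b₁ := by omega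

lemma sum_pairs_mixed {m : ℕ} (A M : Fin (m + 1) × Fin 2 → Fin (m + 1) × Fin 2 → ℝ)
    (hA : A ((0 : Fin (m + 1)), (1 : Fin 2)) (0, 0) = -A (0, 0) (0, 1))
    (hM0 : ∀ x y : Fin (m + 1) × Fin 2, x.1 = 0 ∨ y.1 = 0 → M x y = 0)
    (h01 : ∀ i : Fin m, M (i.succ, 0) (i.succ, 1) = 1)
    (h10 : ∀ i : Fin m, M (i.succ, 1) (i.succ, 0) = -1)
    (hoff : ∀ x y, x.1 ≠ y.1 → M x y = 0) :
    ∑ ψ : Equiv.Perm (Fin (m + 1) × Fin 2),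
        ((Equiv.Perm.sign ψ : ℤ) : ℝ) *
          (A (ψ (0, 0)) (ψ (0, 1)) * ∏ i : Fin m, M (ψ (i.succ, 0)) (ψ (i.succ, 1)))
      = 2 ^ (m + 1) * (m.factorial : ℝ) * A (0, 0) (0, 1) := by
  classical
  set F : Equiv.Perm (Fin (m + 1) × Fin 2) → ℝ := fun ψ =>
    ((Equiv.Perm.sign ψ : ℤ) : ℝ) *
      (A (ψ (0, 0)) (ψ (0, 1)) * ∏ i : Fin m, M (ψ (i.succ, 0)) (ψ (i.succ, 1))) with hF
  have e11 : (1 + 1 : Fin 2) = 0 := rfl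
  set Φ : Equiv.Perm (Fin m) × (Fin (m + 1) → Fin 2) → Equiv.Perm (Fin (m + 1) × Fin 2) :=
    fun te => flipPerm (Equiv.Perm.decomposeFin.symm (0, te.1)) te.2 with hΦ
  have hΦinj : Function.Injective Φ := by
    rintro ⟨τ1, ε1⟩ ⟨τ2, ε2⟩ h
    have h2 := flipPerm_injective
      (a₁ := (Equiv.Perm.decomposeFin.symm (0, τ1), ε1))
      (a₂ := (Equiv.Perm.decomposeFin.symm (0, τ2), ε2)) h
    rw [Prod.mk.injEq] at h2
    obtain ⟨h3, h4⟩ := h2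
    have h5 := Equiv.Perm.decomposeFin.symm.injective h3
    simp only [Prod.mk.injEq] at h5
    simp [h5.2, h4]
  have hτ0 : ∀ τ'' : Equiv.Perm (Fin m), (Equiv.Perm.decomposeFin.symm (0, τ'')) 0 = 0 :=
    fun τ'' => Equiv.Perm.decomposeFin_symm_apply_zero 0 τ''
  have hτs : ∀ (τ'' : Equiv.Perm (Fin m)) (i : Fin m),
      (Equiv.Perm.decomposeFin.symm (0, τ'')) i.succ = (τ'' i).succ := by
    intro τ'' i
    rw [Equiv.Perm.decomposeFin_symm_apply_succ]
    simp
  have hval : ∀ te : Equiv.Perm (Fin m) × (Fin (m + 1) → Fin 2), F (Φ te) = A (0, 0) (0, 1) := by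
    rintro ⟨τ'', ε⟩
    set τ : Equiv.Perm (Fin (m + 1)) := Equiv.Perm.decomposeFin.symm (0, τ'') with hτ
    have hMf : ∏ i : Fin m, M (flipPerm τ ε (i.succ, 0)) (flipPerm τ ε (i.succ, 1))
        = ∏ i : Fin m, (if ε i.succ = 1 then (-1 : ℝ) else 1) := by
      apply Finset.prod_congr rfl
      intro i _
      rcases (show ε i.succ = 0 ∨ ε i.succ = 1 by omega) with h | h
      · simp [h, hτ, hτs τ'', h01]
      · simp [h, e11, hτ, hτs τ'', h10]
    have hcard : (Finset.univ.filter (fun i : Fin (m + 1) => ε i = 1)).card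
        = (if ε 0 = 1 then 1 else 0)
          + (Finset.univ.filter (fun i : Fin m => ε i.succ = 1)).card := by
      rw [Finset.card_filter, Finset.card_filter, Fin.sum_univ_succ]
    have hAf : A (flipPerm τ ε (0, 0)) (flipPerm τ ε (0, 1))
        = (if ε 0 = 1 then (-1 : ℝ) else 1) * A (0, 0) (0, 1) := by
      rcases (show ε 0 = 0 ∨ ε 0 = 1 by omega) with h | h
      · simp [h, hτ, hτ0 τ'']
      · have h00 : flipPerm τ ε (0, 0) = ((0 : Fin (m+1)), (1 : Fin 2)) := by
          rw [flipPerm_apply]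
          exact Prod.ext (hτ0 τ'') (by rw [zero_add, h])
        have h01' : flipPerm τ ε (0, 1) = ((0 : Fin (m+1)), (0 : Fin 2)) := by
          rw [flipPerm_apply]
          exact Prod.ext (hτ0 τ'') (by rw [h]; rfl)
        rw [h00, h01', if_pos h, hA]
        ring
    rw [hF]
    simp only [hΦ]
    rw [hAf, hMf, sign_flipPerm, Finset.prod_ite, Finset.prod_const, Finset.prod_const, one_pow,
      mul_one, hcard]
    push_cast
    set c' := (Finset.univ.filter (fun i : Fin m => ε i.succ = 1)).card with hc'
    have hx : (-1 : ℝ) ^ c' * (-1) ^ c' = 1 := neg_one_sq_pow _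
    rcases (show ε 0 = 0 ∨ ε 0 = 1 by omega) with h | h
    · rw [if_neg (by simp [h]), if_neg (by simp [h])]
      push_cast
      rw [zero_add]
      obtain ⟨X, hX⟩ : ∃ X : ℝ, X = (-1 : ℝ) ^ c' := ⟨_, rfl⟩
      rw [← hX] at hx ⊢
      linear_combination A (0, 0) (0, 1) * hx
    · rw [if_pos h, if_pos h]
      push_cast
      rw [pow_add, pow_one]
      obtain ⟨X, hX⟩ : ∃ X : ℝ, X = (-1 : ℝ) ^ c' := ⟨_, rfl⟩
      rw [← hX] at hx ⊢
      linear_combination A (0, 0) (0, 1) * hx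
  have himg : ∑ te : Equiv.Perm (Fin m) × (Fin (m + 1) → Fin 2), F (Φ te)
      = ∑ ψ ∈ Finset.image Φ Finset.univ, F ψ :=
    (Finset.sum_image (fun a _ b _ h => hΦinj h)).symm
  have hall : ∑ ψ ∈ Finset.image Φ Finset.univ, F ψ
      = ∑ ψ : Equiv.Perm (Fin (m + 1) × Fin 2), F ψ := by
    apply Finset.sum_subset (Finset.subset_univ _)
    intro ψ _ hψ
    by_contra h0
    have hprod_ne : A (ψ (0,0)) (ψ (0,1)) * ∏ i : Fin m, M (ψ (i.succ, 0)) (ψ (i.succ, 1)) ≠ 0 := by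
      intro h
      exact h0 (by simp only [hF]; rw [h, mul_zero])
    have hMprod_ne : ∏ i : Fin m, M (ψ (i.succ, 0)) (ψ (i.succ, 1)) ≠ 0 :=
      fun h => hprod_ne (by rw [h, mul_zero])
    have hfac : ∀ i : Fin m, M (ψ (i.succ, 0)) (ψ (i.succ, 1)) ≠ 0 :=
      fun i => Finset.prod_ne_zero_iff.1 hMprod_ne i (Finset.mem_univ i)
    have hnz : ∀ (i : Fin m) (b : Fin 2), (ψ (i.succ, b)).1 ≠ 0 := by
      intro i b hb
      rcases (show b = 0 ∨ b = 1 by omega) with rfl | rfl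
      · exact hfac i (hM0 _ _ (Or.inl hb))
      · exact hfac i (hM0 _ _ (Or.inr hb))
    have hnz' : ∀ z : Fin (m+1) × Fin 2, z.1 ≠ 0 → (ψ z).1 ≠ 0 := by
      rintro ⟨a, b⟩ ha
      obtain ⟨j, rfl⟩ := Fin.eq_succ_of_ne_zero ha
      exact hnz j b
    have hsymm0 : ∀ c : Fin 2, (ψ.symm (0, c)).1 = 0 := by
      intro c
      by_contra hc
      have h2 := hnz' (ψ.symm (0, c)) hc
      rw [ψ.apply_symm_apply] at h2
      exact h2 rfl
    have hfst0 : ∀ b : Fin 2, (ψ (0, b)).1 = 0 := by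
      have hb0 : ψ (0, (ψ.symm (0, 0)).2) = ((0 : Fin (m+1)), (0 : Fin 2)) := by
        have h1 : ψ.symm (0, 0) = (0, (ψ.symm (0, 0)).2) :=
          Prod.ext (hsymm0 0) rfl
        conv_lhs => rw [← h1]
        exact ψ.apply_symm_apply _
      have hb1 : ψ (0, (ψ.symm (0, 1)).2) = ((0 : Fin (m+1)), (1 : Fin 2)) := by
        have h1 : ψ.symm (0, 1) = (0, (ψ.symm (0, 1)).2) :=
          Prod.ext (hsymm0 1) rfl
        conv_lhs => rw [← h1]
        exact ψ.apply_symm_apply _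
      have hbne : (ψ.symm (0, 0)).2 ≠ (ψ.symm (0, 1)).2 := by
        intro h
        rw [h, hb1] at hb0
        simp [Prod.ext_iff] at hb0
      intro b
      rcases fin2_cover hbne b with rfl | rfl
      · rw [hb0]
      · rw [hb1]
    have hfst : ∀ j : Fin (m + 1), (ψ (j, 0)).1 = (ψ (j, 1)).1 := by
      intro j
      rcases Fin.eq_zero_or_eq_succ j with rfl | ⟨i, rfl⟩
      · rw [hfst0 0, hfst0 1]
      · by_contra hne
        exact hfac i (hoff _ _ hne)
    obtain ⟨τ, ε, rfl⟩ := flipPerm_classify ψ hfst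
    have hτ00 : τ 0 = 0 := by
      have := hfst0 0
      simpa using this
    have h2 : τ 0 = (Equiv.Perm.decomposeFin τ).1 := by
      conv_lhs => rw [← Equiv.symm_apply_apply Equiv.Perm.decomposeFin τ,
        ← Prod.mk.eta (p := Equiv.Perm.decomposeFin τ)]
      exact Equiv.Perm.decomposeFin_symm_apply_zero _ _
    have h3 : (Equiv.Perm.decomposeFin τ).1 = 0 := h2.symm.trans hτ00
    have hdec : Equiv.Perm.decomposeFin.symm (0, (Equiv.Perm.decomposeFin τ).2) = τ := by
      calc Equiv.Perm.decomposeFin.symm (0, (Equiv.Perm.decomposeFin τ).2)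
          = Equiv.Perm.decomposeFin.symm ((Equiv.Perm.decomposeFin τ).1,
              (Equiv.Perm.decomposeFin τ).2) := by rw [h3]
        _ = Equiv.Perm.decomposeFin.symm (Equiv.Perm.decomposeFin τ) := by rw [Prod.mk.eta]
        _ = τ := Equiv.symm_apply_apply _ _
    exact hψ (Finset.mem_image.2 ⟨((Equiv.Perm.decomposeFin τ).2, ε), Finset.mem_univ _, by
      simp only [hΦ]; rw [hdec]⟩)
  calc ∑ ψ : Equiv.Perm (Fin (m + 1) × Fin 2), F ψ
      = ∑ te : Equiv.Perm (Fin m) × (Fin (m + 1) → Fin 2), F (Φ te) := by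
        rw [himg, hall]
    _ = ∑ _te : Equiv.Perm (Fin m) × (Fin (m + 1) → Fin 2), A (0, 0) (0, 1) := by
        apply Finset.sum_congr rfl; intro te _; exact hval te
    _ = 2 ^ (m + 1) * (m.factorial : ℝ) * A (0, 0) (0, 1) := by
        rw [Finset.sum_const, nsmul_eq_mul, Finset.card_univ, Fintype.card_prod, Fintype.card_perm,
          Fintype.card_fun, Fintype.card_fin, Fintype.card_fin, Fintype.card_fin]
        push_cast
        ring


lemma two_mul_succ (k : ℕ) : 2 * (k + 1) = 2 + 2 * k := by omega


def pairEquiv (m K : ℕ) (h : 2 * m = K) : Fin m × Fin 2 ≃ Fin K where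
  toFun x := ⟨2 * x.1.val + x.2.val, by have := x.1.isLt; have := x.2.isLt; omega⟩
  invFun j := (⟨j.val / 2, by have := j.isLt; omega⟩, ⟨j.val % 2, by omega⟩)
  left_inv := by
    rintro ⟨⟨i, hi⟩, ⟨b, hb⟩⟩
    apply Prod.ext <;> apply Fin.ext <;> simp <;> omega
  right_inv := by
    rintro ⟨j, hj⟩
    apply Fin.ext
    simp
    omega

lemma pairEquiv_val (m K : ℕ) (h : 2 * m = K) (x : Fin m × Fin 2) :
    (pairEquiv m K h x).val = 2 * x.1.val + x.2.val := rfl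

lemma fin2_eta {V : Type*} (g : Fin 2 → V) : ![g 0, g 1] = g := by
  funext i; fin_cases i <;> rfl

lemma iota_castAdd (n m : ℕ) (τ : Equiv.Perm (Fin n)) (j : Fin n) :
    (finSumFinEquiv.permCongr (Equiv.sumCongr τ (Equiv.refl (Fin m)))) (Fin.castAdd m j)
      = Fin.castAdd m (τ j) := by
  simp [Equiv.permCongr_apply, finSumFinEquiv_symm_apply_castAdd, finSumFinEquiv_apply_left]

lemma iota_natAdd (n m : ℕ) (τ : Equiv.Perm (Fin n)) (j : Fin m) :
    (finSumFinEquiv.permCongr (Equiv.sumCongr τ (Equiv.refl (Fin m)))) (Fin.natAdd n j)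
      = Fin.natAdd n j := by
  simp [Equiv.permCongr_apply, finSumFinEquiv_symm_apply_natAdd, finSumFinEquiv_apply_right]

lemma iota_sign (n m : ℕ) (τ : Equiv.Perm (Fin n)) :
    Equiv.Perm.sign (finSumFinEquiv.permCongr (Equiv.sumCongr τ (Equiv.refl (Fin m)))) =
      Equiv.Perm.sign τ := by
  rw [Equiv.Perm.sign_permCongr, Equiv.Perm.sign_sumCongr]
  simp

lemma iota_castAdd' (n m : ℕ) (τ : Equiv.Perm (Fin m)) (j : Fin n) :
    (finSumFinEquiv.permCongr (Equiv.sumCongr (Equiv.refl (Fin n)) τ)) (Fin.castAdd m j)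
      = Fin.castAdd m j := by
  simp [Equiv.permCongr_apply, finSumFinEquiv_symm_apply_castAdd, finSumFinEquiv_apply_left]

lemma iota_natAdd' (n m : ℕ) (τ : Equiv.Perm (Fin m)) (j : Fin m) :
    (finSumFinEquiv.permCongr (Equiv.sumCongr (Equiv.refl (Fin n)) τ)) (Fin.natAdd n j)
      = Fin.natAdd n (τ j) := by
  simp [Equiv.permCongr_apply, finSumFinEquiv_symm_apply_natAdd, finSumFinEquiv_apply_right]

lemma iota_sign' (n m : ℕ) (τ : Equiv.Perm (Fin m)) :
    Equiv.Perm.sign (finSumFinEquiv.permCongr (Equiv.sumCongr (Equiv.refl (Fin n)) τ)) =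
      Equiv.Perm.sign τ := by
  rw [Equiv.Perm.sign_permCongr, Equiv.Perm.sign_sumCongr]
  simp

lemma wpow_eq_sum {V : Type*} (o : (Fin 2 → V) → ℝ) (k : ℕ) (v : Fin (2 * k) → V) :
    wpow o k v = (1 / 2 ^ k) *
      ∑ ρ : Equiv.Perm (Fin (2 * k)), ((Equiv.Perm.sign ρ : ℤ) : ℝ) *
        ∏ i : Fin k, o ![v (ρ (pairEquiv k (2 * k) rfl (i, 0))),
          v (ρ (pairEquiv k (2 * k) rfl (i, 1)))] := by
  induction k with
  | zero =>
    have huniv : (Finset.univ : Finset (Equiv.Perm (Fin (2 * 0)))) = {1} := by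
      apply Finset.eq_singleton_iff_unique_mem.2
      refine ⟨Finset.mem_univ _, fun σ _ => Equiv.ext fun x => ?_⟩
      exact absurd x.isLt (by omega)
    rw [show wpow o 0 v = 1 from rfl, huniv, Finset.sum_singleton]
    simp
  | succ k ih =>
    set pE := pairEquiv (k + 1) (2 * (k + 1)) rfl with hpE
    set pEk := pairEquiv k (2 * k) rfl with hpEk
    set ι : Equiv.Perm (Fin (2 * k)) → Equiv.Perm (Fin (2 * (k + 1))) := fun τ =>
      Equiv.permCongr finSumFinEquiv (Equiv.sumCongr τ (Equiv.refl (Fin 2))) with hι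
    have hι1 : ∀ (τ : Equiv.Perm (Fin (2 * k))) (j : Fin (2 * k)),
        (ι τ) (Fin.castAdd 2 j) = Fin.castAdd 2 (τ j) := fun τ j => iota_castAdd (2 * k) 2 τ j
    have hι2 : ∀ (τ : Equiv.Perm (Fin (2 * k))) (j : Fin 2),
        (ι τ) (Fin.natAdd (2 * k) j) = Fin.natAdd (2 * k) j := fun τ j => iota_natAdd (2 * k) 2 τ j
    have hsgnι : ∀ τ, Equiv.Perm.sign (ι τ) = Equiv.Perm.sign τ := fun τ => iota_sign (2 * k) 2 τ
    have hp1 : ∀ (i : Fin k) (b : Fin 2), pE (i.castSucc, b) = Fin.castAdd 2 (pEk (i, b)) := by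
      intro i b; apply Fin.ext
      rw [pairEquiv_val]
      rw [show (Fin.castAdd 2 (pEk (i, b))).val = (pEk (i, b)).val from rfl, pairEquiv_val]
      rfl
    have hp2 : ∀ b : Fin 2, pE (Fin.last k, b) = Fin.natAdd (2 * k) b := by
      intro b; apply Fin.ext
      rw [pairEquiv_val]
      rfl
    set F : Equiv.Perm (Fin (2 * (k + 1))) → ℝ := fun ρ =>
      ((Equiv.Perm.sign ρ : ℤ) : ℝ) *
        ∏ i : Fin (k + 1), o ![v (ρ (pE (i, 0))), v (ρ (pE (i, 1)))] with hF
    have expand : wpow o (k + 1) v =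
        (1 / (((2 * k).factorial : ℝ) * ((2 : ℕ).factorial : ℝ))) *
          ∑ σ : Equiv.Perm (Fin (2 * (k + 1))), ((Equiv.Perm.sign σ : ℤ) : ℝ) *
            (wpow o k (fun j => v (σ (Fin.castAdd 2 j))) *
             o (fun j => v (σ (Fin.natAdd (2 * k) j)))) := rfl
    have hval : ∀ (σ : Equiv.Perm (Fin (2 * (k + 1)))) (τ : Equiv.Perm (Fin (2 * k))),
        F (σ * ι τ) = ((Equiv.Perm.sign σ : ℤ) : ℝ) * ((Equiv.Perm.sign τ : ℤ) : ℝ) *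
          ((∏ i : Fin k, o ![v (σ (Fin.castAdd 2 (τ (pEk (i, 0))))),
              v (σ (Fin.castAdd 2 (τ (pEk (i, 1)))))]) *
           o (fun j => v (σ (Fin.natAdd (2 * k) j)))) := by
      intro σ τ
      simp only [hF]
      rw [Fin.prod_univ_castSucc]
      have hlast : o ![v ((σ * ι τ) (pE (Fin.last k, 0))), v ((σ * ι τ) (pE (Fin.last k, 1)))]
          = o (fun j => v (σ (Fin.natAdd (2 * k) j))) := by
        rw [hp2, hp2]
        rw [show (σ * ι τ) (Fin.natAdd (2 * k) 0) = σ (Fin.natAdd (2 * k) 0) by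
          rw [Equiv.Perm.mul_apply, hι2]]
        rw [show (σ * ι τ) (Fin.natAdd (2 * k) 1) = σ (Fin.natAdd (2 * k) 1) by
          rw [Equiv.Perm.mul_apply, hι2]]
        exact congrArg o (fin2_eta (fun j => v (σ (Fin.natAdd (2 * k) j))))
      rw [hlast]
      have hcast : ∀ (i : Fin k) (b : Fin 2),
          (σ * ι τ) (pE (i.castSucc, b)) = σ (Fin.castAdd 2 (τ (pEk (i, b)))) := by
        intro i b
        rw [hp1, Equiv.Perm.mul_apply, hι1]
      have hprod : ∏ i : Fin k,
          o ![v ((σ * ι τ) (pE (i.castSucc, 0))), v ((σ * ι τ) (pE (i.castSucc, 1)))]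
          = ∏ i : Fin k, o ![v (σ (Fin.castAdd 2 (τ (pEk (i, 0))))),
              v (σ (Fin.castAdd 2 (τ (pEk (i, 1)))))] := by
        apply Finset.prod_congr rfl
        intro i _
        rw [hcast i 0, hcast i 1]
      rw [hprod]
      rw [map_mul, hsgnι]
      push_cast
      ring
    have hterm : ∀ σ : Equiv.Perm (Fin (2 * (k + 1))),
        ((Equiv.Perm.sign σ : ℤ) : ℝ) *
          (wpow o k (fun j => v (σ (Fin.castAdd 2 j))) *
           o (fun j => v (σ (Fin.natAdd (2 * k) j))))
        = (1 / 2 ^ k) * ∑ τ : Equiv.Perm (Fin (2 * k)), F (σ * ι τ) := by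
      intro σ
      rw [ih]
      rw [Finset.sum_congr rfl (fun τ _ => hval σ τ)]
      simp only [Finset.mul_sum, Finset.sum_mul]
      apply Finset.sum_congr rfl
      intro τ _
      ring
    rw [expand]
    rw [Finset.sum_congr rfl (fun σ _ => hterm σ), ← Finset.mul_sum, Finset.sum_comm]
    have hinner : ∀ τ : Equiv.Perm (Fin (2 * k)),
        (∑ σ : Equiv.Perm (Fin (2 * (k + 1))), F (σ * ι τ))
        = ∑ ρ : Equiv.Perm (Fin (2 * (k + 1))), F ρ := by
      intro τ
      exact Equiv.sum_comp (Equiv.mulRight (ι τ)) F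
    rw [Finset.sum_congr rfl (fun τ _ => hinner τ), Finset.sum_const, Finset.card_univ,
      Fintype.card_perm, Fintype.card_fin, nsmul_eq_mul]
    simp only [hF]
    have h2 : ((2 : ℕ).factorial : ℝ) = 2 := by norm_num [Nat.factorial]
    have hfac : (((2 * k).factorial : ℕ) : ℝ) ≠ 0 := by
      exact_mod_cast Nat.factorial_ne_zero _
    rw [h2]
    field_simp
    ring

lemma wedge2_eq_sum {V : Type*} (a o : (Fin 2 → V) → ℝ) (k : ℕ) (v : Fin (2 + 2 * k) → V) :
    wedgeRaw 2 (2 * k) a (wpow o k) v = (1 / 2 ^ (k + 1)) *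
      ∑ ρ : Equiv.Perm (Fin (2 + 2 * k)), ((Equiv.Perm.sign ρ : ℤ) : ℝ) *
        (a ![v (ρ (pairEquiv (k + 1) (2 + 2 * k) (two_mul_succ k) (0, 0))),
             v (ρ (pairEquiv (k + 1) (2 + 2 * k) (two_mul_succ k) (0, 1)))] *
         ∏ i : Fin k, o ![v (ρ (pairEquiv (k + 1) (2 + 2 * k) (two_mul_succ k) (i.succ, 0))),
             v (ρ (pairEquiv (k + 1) (2 + 2 * k) (two_mul_succ k) (i.succ, 1)))]) := by
  set qE := pairEquiv (k + 1) (2 + 2 * k) (two_mul_succ k) with hqE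
  set pEk := pairEquiv k (2 * k) rfl with hpEk
  set ι : Equiv.Perm (Fin (2 * k)) → Equiv.Perm (Fin (2 + 2 * k)) := fun τ =>
    Equiv.permCongr finSumFinEquiv (Equiv.sumCongr (Equiv.refl (Fin 2)) τ) with hι
  have hι1 : ∀ (τ : Equiv.Perm (Fin (2 * k))) (j : Fin 2),
      (ι τ) (Fin.castAdd (2 * k) j) = Fin.castAdd (2 * k) j := fun τ j =>
    iota_castAdd' 2 (2 * k) τ j
  have hι2 : ∀ (τ : Equiv.Perm (Fin (2 * k))) (j : Fin (2 * k)),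
      (ι τ) (Fin.natAdd 2 j) = Fin.natAdd 2 (τ j) := fun τ j => iota_natAdd' 2 (2 * k) τ j
  have hsgnι : ∀ τ, Equiv.Perm.sign (ι τ) = Equiv.Perm.sign τ := fun τ => iota_sign' 2 (2 * k) τ
  have hq1 : ∀ b : Fin 2, qE (0, b) = Fin.castAdd (2 * k) b := by
    intro b; apply Fin.ext
    rw [pairEquiv_val]
    rw [show (Fin.castAdd (2 * k) b).val = b.val from rfl]
    simp
  have hq2 : ∀ (i : Fin k) (b : Fin 2), qE (i.succ, b) = Fin.natAdd 2 (pEk (i, b)) := by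
    intro i b; apply Fin.ext
    rw [pairEquiv_val]
    rw [show (Fin.natAdd 2 (pEk (i, b))).val = 2 + (pEk (i, b)).val from rfl, pairEquiv_val]
    simp [Fin.val_succ]
    omega
  set F : Equiv.Perm (Fin (2 + 2 * k)) → ℝ := fun ρ =>
    ((Equiv.Perm.sign ρ : ℤ) : ℝ) *
      (a ![v (ρ (qE (0, 0))), v (ρ (qE (0, 1)))] *
       ∏ i : Fin k, o ![v (ρ (qE (i.succ, 0))), v (ρ (qE (i.succ, 1)))]) with hF
  have expand : wedgeRaw 2 (2 * k) a (wpow o k) v =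
      (1 / (((2 : ℕ).factorial : ℝ) * (((2 * k)).factorial : ℝ))) *
        ∑ σ : Equiv.Perm (Fin (2 + 2 * k)), ((Equiv.Perm.sign σ : ℤ) : ℝ) *
          (a (fun j => v (σ (Fin.castAdd (2 * k) j))) *
           wpow o k (fun j => v (σ (Fin.natAdd 2 j)))) := rfl
  have hval : ∀ (σ : Equiv.Perm (Fin (2 + 2 * k))) (τ : Equiv.Perm (Fin (2 * k))),
      F (σ * ι τ) = ((Equiv.Perm.sign σ : ℤ) : ℝ) * ((Equiv.Perm.sign τ : ℤ) : ℝ) *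
        (a (fun j => v (σ (Fin.castAdd (2 * k) j))) *
         ∏ i : Fin k, o ![v (σ (Fin.natAdd 2 (τ (pEk (i, 0))))),
            v (σ (Fin.natAdd 2 (τ (pEk (i, 1)))))]) := by
    intro σ τ
    simp only [hF]
    have hfirst : a ![v ((σ * ι τ) (qE (0, 0))), v ((σ * ι τ) (qE (0, 1)))]
        = a (fun j => v (σ (Fin.castAdd (2 * k) j))) := by
      rw [hq1, hq1]
      rw [show (σ * ι τ) (Fin.castAdd (2 * k) 0) = σ (Fin.castAdd (2 * k) 0) by
        rw [Equiv.Perm.mul_apply, hι1]]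
      rw [show (σ * ι τ) (Fin.castAdd (2 * k) 1) = σ (Fin.castAdd (2 * k) 1) by
        rw [Equiv.Perm.mul_apply, hι1]]
      exact congrArg a (fin2_eta (fun j => v (σ (Fin.castAdd (2 * k) j))))
    rw [hfirst]
    have hcast : ∀ (i : Fin k) (b : Fin 2),
        (σ * ι τ) (qE (i.succ, b)) = σ (Fin.natAdd 2 (τ (pEk (i, b)))) := by
      intro i b
      rw [hq2, Equiv.Perm.mul_apply, hι2]
    have hprod : ∏ i : Fin k,
        o ![v ((σ * ι τ) (qE (i.succ, 0))), v ((σ * ι τ) (qE (i.succ, 1)))]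
        = ∏ i : Fin k, o ![v (σ (Fin.natAdd 2 (τ (pEk (i, 0))))),
            v (σ (Fin.natAdd 2 (τ (pEk (i, 1)))))] := by
      apply Finset.prod_congr rfl
      intro i _
      rw [hcast i 0, hcast i 1]
    rw [hprod]
    rw [map_mul, hsgnι]
    push_cast
    ring
  have hterm : ∀ σ : Equiv.Perm (Fin (2 + 2 * k)),
      ((Equiv.Perm.sign σ : ℤ) : ℝ) *
        (a (fun j => v (σ (Fin.castAdd (2 * k) j))) *
         wpow o k (fun j => v (σ (Fin.natAdd 2 j))))
      = (1 / 2 ^ k) * ∑ τ : Equiv.Perm (Fin (2 * k)), F (σ * ι τ) := by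
    intro σ
    rw [wpow_eq_sum]
    rw [Finset.sum_congr rfl (fun τ _ => hval σ τ)]
    simp only [Finset.mul_sum, Finset.sum_mul]
    apply Finset.sum_congr rfl
    intro τ _
    ring
  rw [expand]
  rw [Finset.sum_congr rfl (fun σ _ => hterm σ), ← Finset.mul_sum, Finset.sum_comm]
  have hinner : ∀ τ : Equiv.Perm (Fin (2 * k)),
      (∑ σ : Equiv.Perm (Fin (2 + 2 * k)), F (σ * ι τ))
      = ∑ ρ : Equiv.Perm (Fin (2 + 2 * k)), F ρ := by
    intro τ
    exact Equiv.sum_comp (Equiv.mulRight (ι τ)) F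
  rw [Finset.sum_congr rfl (fun τ _ => hinner τ), Finset.sum_const, Finset.card_univ,
    Fintype.card_perm, Fintype.card_fin, nsmul_eq_mul]
  simp only [hF]
  have h2 : ((2 : ℕ).factorial : ℝ) = 2 := by norm_num [Nat.factorial]
  have hfac : (((2 * k).factorial : ℕ) : ℝ) ≠ 0 := by
    exact_mod_cast Nat.factorial_ne_zero _
  rw [h2]
  field_simp
  ring



variable {V : Type*} [AddCommGroup V] [Module ℝ V]

lemma update2_0 (a b c : V) : Function.update ![a, b] 0 c = ![c, b] := by
  funext i; fin_cases i <;> simp [Function.update]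

lemma update2_1 (a b c : V) : Function.update ![a, b] 1 c = ![a, c] := by
  funext i; fin_cases i <;> simp [Function.update]

def altBilin (ω : V [⋀^Fin 2]→ₗ[ℝ] ℝ) : V →ₗ[ℝ] V →ₗ[ℝ] ℝ :=
  LinearMap.mk₂ ℝ (fun x y => ω ![x, y])
    (fun a a' y => by
      have h := ω.map_update_add (v := ![a, y]) 0 a a'
      rwa [update2_0, update2_0, update2_0] at h)
    (fun c a y => by
      have h := ω.map_update_smul (v := ![a, y]) 0 c a
      rwa [update2_0, update2_0] at h)
    (fun a b b' => by
      have h := ω.map_update_add (v := ![a, b]) 1 b b'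
      rwa [update2_1, update2_1, update2_1] at h)
    (fun c a b => by
      have h := ω.map_update_smul (v := ![a, b]) 1 c b
      rwa [update2_1, update2_1] at h)

@[simp] lemma altBilin_apply (ω : V [⋀^Fin 2]→ₗ[ℝ] ℝ) (x y : V) :
    altBilin ω x y = ω ![x, y] := rfl

lemma alt_swap (ω : V [⋀^Fin 2]→ₗ[ℝ] ℝ) (x y : V) : ω ![y, x] = -ω ![x, y] := by
  have h := ω.map_swap (v := ![x, y]) (show (0 : Fin 2) ≠ 1 by decide)
  have h2 : ![x, y] ∘ Equiv.swap (0 : Fin 2) 1 = ![y, x] := by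
    funext i; fin_cases i <;> simp
  rwa [h2] at h

lemma alt_self (ω : V [⋀^Fin 2]→ₗ[ℝ] ℝ) (x : V) : ω ![x, x] = 0 :=
  ω.map_eq_zero_of_eq ![x, x] (i := 0) (j := 1) rfl (by decide)

lemma altB_anti (ω : V [⋀^Fin 2]→ₗ[ℝ] ℝ) (x y : V) : altBilin ω y x = -altBilin ω x y := by
  simp [alt_swap ω x y]

def IsSympFam (B : V →ₗ[ℝ] V →ₗ[ℝ] ℝ) (u v : V) {k : ℕ} (p q : Fin k → V) : Prop :=
  (∀ i, B (p i) (q i) = 1) ∧ (∀ i j, i ≠ j → B (p i) (q j) = 0) ∧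
  (∀ i j, B (p i) (p j) = 0) ∧ (∀ i j, B (q i) (q j) = 0) ∧
  (∀ i, B u (p i) = 0) ∧ (∀ i, B u (q i) = 0) ∧ (∀ i, B v (p i) = 0) ∧ (∀ i, B v (q i) = 0)

lemma step_bound [FiniteDimensional ℝ V] (A : Submodule ℝ V) (g : V →ₗ[ℝ] ℝ) :
    finrank ℝ A ≤ finrank ℝ ↥(A ⊓ LinearMap.ker g) + 1 := by
  have h1 := LinearMap.finrank_range_add_finrank_ker (g.domRestrict A)
  have h2 : finrank ℝ (LinearMap.range (g.domRestrict A)) ≤ 1 := by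
    have := Submodule.finrank_le (LinearMap.range (g.domRestrict A))
    simpa using this
  have h3 : finrank ℝ (LinearMap.ker (g.domRestrict A)) ≤ finrank ℝ ↥(A ⊓ LinearMap.ker g) := by
    have hmem : ∀ x : LinearMap.ker (g.domRestrict A),
        (A.subtype.comp (LinearMap.ker (g.domRestrict A)).subtype) x ∈ A ⊓ LinearMap.ker g := by
      rintro ⟨⟨x, hxA⟩, hxk⟩
      refine Submodule.mem_inf.2 ⟨hxA, ?_⟩
      simpa [LinearMap.mem_ker] using hxk
    have hinj : Function.Injective
        ⇑(LinearMap.codRestrict (A ⊓ LinearMap.ker g)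
          (A.subtype.comp (LinearMap.ker (g.domRestrict A)).subtype) hmem) := by
      intro x y hxy
      have hinj0 : Function.Injective
          ⇑(A.subtype.comp (LinearMap.ker (g.domRestrict A)).subtype) :=
        (Submodule.injective_subtype A).comp (Submodule.injective_subtype _)
      apply hinj0
      have h5 := congrArg Subtype.val hxy
      simpa using h5
    exact LinearMap.finrank_le_finrank_of_injective hinj
  omega

lemma finrank_iInf_ker_bound [FiniteDimensional ℝ V] {ι : Type*} [Fintype ι] [DecidableEq ι]
    (f : ι → (V →ₗ[ℝ] ℝ)) :
    finrank ℝ V ≤ finrank ℝ ↥(⨅ i, LinearMap.ker (f i)) + Fintype.card ι := by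
  have main : ∀ s : Finset ι,
      finrank ℝ V ≤ finrank ℝ ↥(⨅ i ∈ s, LinearMap.ker (f i)) + s.card := by
    intro s
    induction s using Finset.induction_on with
    | empty =>
      have : (⨅ i ∈ (∅ : Finset ι), LinearMap.ker (f i)) = ⊤ := by simp
      rw [this, finrank_top]
      omega
    | @insert a s ha ih =>
      have heq : (⨅ i ∈ insert a s, LinearMap.ker (f i))
          = (⨅ i ∈ s, LinearMap.ker (f i)) ⊓ LinearMap.ker (f a) := by
        rw [Finset.iInf_insert, inf_comm]
      have hstep := step_bound (⨅ i ∈ s, LinearMap.ker (f i)) (f a)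
      rw [heq, Finset.card_insert_of_notMem ha]
      omega
  have h := main Finset.univ
  have huniv : (⨅ i ∈ (Finset.univ : Finset ι), LinearMap.ker (f i))
      = ⨅ i, LinearMap.ker (f i) := by simp
  rw [huniv, Finset.card_univ] at h
  exact h

lemma exists_sympFam (n : ℕ) (hn : 0 < n)
    (hdim : Module.finrank ℝ V = 2 * n) (ω : V [⋀^Fin 2]→ₗ[ℝ] ℝ)
    (hnd : ∀ u : V, (∀ w : V, ω ![u, w] = 0) → u = 0)
    (u v : V) (k : ℕ)
    (hcase : (k + 2 ≤ n) ∨ (u = 0 ∧ v = 0 ∧ k ≤ n)) :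
    ∃ p q : Fin k → V, IsSympFam (altBilin ω) u v p q := by
  classical
  have hFD : FiniteDimensional ℝ V := FiniteDimensional.of_finrank_pos (by omega)
  set B := altBilin ω with hB
  have hanti : ∀ x y : V, B y x = -B x y := altB_anti ω
  have hself : ∀ x : V, B x x = 0 := fun x => by simp [hB, alt_self]
  induction k with
  | zero =>
    exact ⟨Fin.elim0, Fin.elim0, fun i => i.elim0, fun i => i.elim0, fun i => i.elim0,
      fun i => i.elim0, fun i => i.elim0, fun i => i.elim0, fun i => i.elim0, fun i => i.elim0⟩
  | succ k ih =>
    obtain ⟨p, q, hfam⟩ := ih (by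
      rcases hcase with h | ⟨h1, h2, h3⟩
      · exact Or.inl (by omega)
      · exact Or.inr ⟨h1, h2, by omega⟩)
    obtain ⟨hpq1, hpq0, hpp, hqq, hup, huq, hvp, hvq⟩ := hfam
    -- the orthogonal complement Z
    set t : Fin k ⊕ Fin k → V := Sum.elim p q with ht
    set Z : Submodule ℝ V := (⨅ i : Fin k ⊕ Fin k, LinearMap.ker (B (t i)))
      ⊓ (LinearMap.ker (B u) ⊓ LinearMap.ker (B v)) with hZ
    have hZmem : ∀ z, z ∈ Z ↔ ((∀ i, B (p i) z = 0) ∧ (∀ i, B (q i) z = 0))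
        ∧ (B u z = 0 ∧ B v z = 0) := by
      intro z
      rw [hZ]
      simp only [Submodule.mem_inf, Submodule.mem_iInf, LinearMap.mem_ker, Sum.forall, ht,
        Sum.elim_inl, Sum.elim_inr]
    -- dimension lower bound on Z
    have hdimZ : 2 * n ≤ finrank ℝ Z + (2 * k + 2) ∧
        ((u = 0 ∧ v = 0) → 2 * n ≤ finrank ℝ Z + 2 * k) := by
      constructor
      · have hbound := finrank_iInf_ker_bound
          (f := Sum.elim (fun i : Fin k ⊕ Fin k => B (t i))
            (Sum.elim (fun _ : Fin 1 => B u) (fun _ : Fin 1 => B v)))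
        have hZeq : (⨅ i, LinearMap.ker ((Sum.elim (fun i : Fin k ⊕ Fin k => B (t i))
            (Sum.elim (fun _ : Fin 1 => B u) (fun _ : Fin 1 => B v))) i)) = Z := by
          rw [hZ, iInf_sum]
          congr 1
          simp [iInf_sum, iInf_const]
        rw [hZeq] at hbound
        simp only [Fintype.card_sum, Fintype.card_fin] at hbound
        omega
      · rintro ⟨rfl, rfl⟩
        have hbound := finrank_iInf_ker_bound (f := fun i : Fin k ⊕ Fin k => B (t i))
        have hZeq : (⨅ i : Fin k ⊕ Fin k, LinearMap.ker (B (t i))) = Z := by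
          rw [hZ]
          have hk0 : B (0 : V) = 0 := map_zero B
          rw [hk0]
          simp
        rw [hZeq] at hbound
        simp only [Fintype.card_sum, Fintype.card_fin] at hbound
        omega
    -- there are non-orthogonal vectors in Z
    have hkey : ∃ z1 ∈ Z, ∃ z2 ∈ Z, B z1 z2 ≠ 0 := by
      by_contra hiso
      push_neg at hiso
      -- the map Φ : V → Dual Z
      set Φ : V →ₗ[ℝ] Module.Dual ℝ Z := Z.dualRestrict.comp B with hΦ
      have hΦapp : ∀ (x : V) (z : Z), Φ x z = B x z.1 := fun x z => rfl
      have hBinj : Function.Injective B := by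
        rw [← LinearMap.ker_eq_bot]
        apply (Submodule.eq_bot_iff _).2
        intro x hx
        apply hnd
        intro w
        have := LinearMap.congr_fun (LinearMap.mem_ker.1 hx) w
        simpa [hB] using this
      have hBsurj : Function.Surjective B := by
        rw [← LinearMap.range_eq_top]
        apply Submodule.eq_top_of_finrank_eq
        rw [LinearMap.finrank_range_of_inj hBinj, Subspace.dual_finrank_eq]
      have hΦsurj : Function.Surjective Φ := by
        rw [hΦ, LinearMap.coe_comp]
        exact (Subspace.dualRestrict_surjective).comp hBsurj
      have hrn := LinearMap.finrank_range_add_finrank_ker Φ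
      have hrange : LinearMap.range Φ = ⊤ := LinearMap.range_eq_top.2 hΦsurj
      rw [hrange] at hrn
      have hdual : finrank ℝ (⊤ : Submodule ℝ (Module.Dual ℝ Z)) = finrank ℝ Z := by
        rw [finrank_top, Subspace.dual_finrank_eq]
      rw [hdual] at hrn
      -- span of the p's and q's
      set S : Submodule ℝ V := Submodule.span ℝ (Set.range t) with hS
      have hLI : LinearIndependent ℝ t := by
        rw [Fintype.linearIndependent_iff]
        intro g hg
        have happly : ∀ x : V, B x (∑ i, g i • t i) = ∑ i, g i * B x (t i) := by
          intro x
          rw [map_sum]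
          apply Finset.sum_congr rfl
          intro i _
          rw [map_smul]
          rfl
        intro i
        rcases i with j | j
        · have h0 := happly (q j)
          rw [hg, map_zero] at h0
          have : ∀ i : Fin k ⊕ Fin k, g i * B (q j) (t i)
              = if i = Sum.inl j then -g (Sum.inl j) else 0 := by
            rintro (i | i)
            · rcases eq_or_ne i j with rfl | hij
              · simp [ht, hanti (p i) (q i), hpq1 i]
              · simp [ht, hanti (p i) (q j), hpq0 i j hij, Sum.inl.injEq, hij]
            · simp [ht, hqq j i]
          rw [Finset.sum_congr rfl (fun i _ => this i), Finset.sum_ite_eq'] at h0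
          simpa using h0.symm
        · have h0 := happly (p j)
          rw [hg, map_zero] at h0
          have : ∀ i : Fin k ⊕ Fin k, g i * B (p j) (t i)
              = if i = Sum.inr j then g (Sum.inr j) else 0 := by
            rintro (i | i)
            · simp [ht, hpp j i]
            · rcases eq_or_ne j i with rfl | hij
              · simp [ht, hpq1 j]
              · simp [ht, hpq0 j i hij, Sum.inr.injEq, Ne.symm hij]
          rw [Finset.sum_congr rfl (fun i _ => this i), Finset.sum_ite_eq'] at h0
          simpa using h0.symm
      have hSdim : finrank ℝ S = 2 * k := by
        rw [hS, finrank_span_eq_card hLI]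
        simp only [Fintype.card_sum, Fintype.card_fin]
        omega
      have hZS : Z ⊓ S = ⊥ := by
        rw [Submodule.eq_bot_iff]
        rintro z ⟨hzZ, hzS⟩
        obtain ⟨g, hg⟩ := (Submodule.mem_span_range_iff_exists_fun ℝ).1 hzS
        have happly : ∀ x : V, B x z = ∑ i, g i * B x (t i) := by
          intro x
          rw [← hg, map_sum]
          apply Finset.sum_congr rfl
          intro i _
          rw [map_smul]
          rfl
        have hcoeff : ∀ i, g i = 0 := by
          intro i
          rcases i with j | j
          · have h0 := happly (q j)
            rw [((hZmem z).1 hzZ).1.2 j] at h0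
            have : ∀ i : Fin k ⊕ Fin k, g i * B (q j) (t i)
                = if i = Sum.inl j then -g (Sum.inl j) else 0 := by
              rintro (i | i)
              · rcases eq_or_ne i j with rfl | hij
                · simp [ht, hanti (p i) (q i), hpq1 i]
                · simp [ht, hanti (p i) (q j), hpq0 i j hij, Sum.inl.injEq, hij]
              · simp [ht, hqq j i]
            rw [Finset.sum_congr rfl (fun i _ => this i), Finset.sum_ite_eq'] at h0
            simpa using h0.symm
          · have h0 := happly (p j)
            rw [((hZmem z).1 hzZ).1.1 j] at h0
            have : ∀ i : Fin k ⊕ Fin k, g i * B (p j) (t i)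
                = if i = Sum.inr j then g (Sum.inr j) else 0 := by
              rintro (i | i)
              · simp [ht, hpp j i]
              · rcases eq_or_ne j i with rfl | hij
                · simp [ht, hpq1 j]
                · simp [ht, hpq0 j i hij, Sum.inr.injEq, Ne.symm hij]
            rw [Finset.sum_congr rfl (fun i _ => this i), Finset.sum_ite_eq'] at h0
            simpa using h0.symm
        rw [← hg]
        apply Finset.sum_eq_zero
        intro i _
        rw [hcoeff i, zero_smul]
      have hZle : Z ≤ LinearMap.ker Φ := by
        intro z hz
        rw [LinearMap.mem_ker]
        apply LinearMap.ext
        rintro ⟨z', hz'⟩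
        have := hiso z hz z' hz'
        simpa [hΦapp] using this
      have hSle : S ≤ LinearMap.ker Φ := by
        rw [hS, Submodule.span_le]
        rintro x ⟨i, rfl⟩
        rw [SetLike.mem_coe, LinearMap.mem_ker]
        apply LinearMap.ext
        rintro ⟨z', hz'⟩
        have hz'mem := (hZmem z').1 hz'
        rcases i with j | j
        · simpa [hΦapp, ht] using hz'mem.1.1 j
        · simpa [hΦapp, ht] using hz'mem.1.2 j
      have hsup_le : Z ⊔ S ≤ LinearMap.ker Φ := sup_le hZle hSle
      have hsup_dim := Submodule.finrank_sup_add_finrank_inf_eq Z S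
      rw [hZS] at hsup_dim
      have hsup_le_dim : finrank ℝ ↥(Z ⊔ S) ≤ finrank ℝ (LinearMap.ker Φ) :=
        Submodule.finrank_mono hsup_le
      have hbot : finrank ℝ (⊥ : Submodule ℝ V) = 0 := finrank_bot ℝ V
      rcases hcase with hc | ⟨hu0, hv0, hc⟩
      · have := hdimZ.1
        rw [hdim] at hrn
        omega
      · have := hdimZ.2 ⟨hu0, hv0⟩
        rw [hdim] at hrn
        omega
    -- extend the family
    obtain ⟨z1, hz1, z2, hz2, hz12⟩ := hkey
    set c : ℝ := (B z1 z2)⁻¹ with hc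
    set z2' : V := c • z2 with hz2'
    have hz2'mem : z2' ∈ Z := Submodule.smul_mem Z c hz2
    have hz1m := (hZmem z1).1 hz1
    have hz2'm := (hZmem z2').1 hz2'mem
    have hBz1z2' : B z1 z2' = 1 := by
      rw [hz2', map_smul]
      simp [hc]
      exact inv_mul_cancel₀ hz12
    refine ⟨Fin.snoc p z1, Fin.snoc q z2', ?_, ?_, ?_, ?_, ?_, ?_, ?_, ?_⟩
    · intro i
      induction i using Fin.lastCases with
      | last => simpa using hBz1z2'
      | cast i => simpa using hpq1 i
    · intro i j hij
      induction i using Fin.lastCases with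
      | last =>
        induction j using Fin.lastCases with
        | last => exact absurd rfl hij
        | cast j =>
          simp only [Fin.snoc_last, Fin.snoc_castSucc]
          rw [hanti]
          rw [((hZmem z1).1 hz1).1.2 j]
          ring
      | cast i =>
        induction j using Fin.lastCases with
        | last =>
          simp only [Fin.snoc_last, Fin.snoc_castSucc]
          exact hz2'm.1.1 i
        | cast j =>
          simp only [Fin.snoc_castSucc]
          exact hpq0 i j (by simpa using hij)
    · intro i j
      induction i using Fin.lastCases with
      | last =>
        induction j using Fin.lastCases with
        | last => simpa using hself z1
        | cast j =>
          simp only [Fin.snoc_last, Fin.snoc_castSucc]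
          rw [hanti, ((hZmem z1).1 hz1).1.1 j]
          ring
      | cast i =>
        induction j using Fin.lastCases with
        | last =>
          simp only [Fin.snoc_last, Fin.snoc_castSucc]
          exact hz1m.1.1 i
        | cast j => simpa using hpp i j
    · intro i j
      induction i using Fin.lastCases with
      | last =>
        induction j using Fin.lastCases with
        | last => simpa using hself z2'
        | cast j =>
          simp only [Fin.snoc_last, Fin.snoc_castSucc]
          rw [hanti, ((hZmem z2').1 hz2'mem).1.2 j]
          ring
      | cast i =>
        induction j using Fin.lastCases with
        | last =>
          simp only [Fin.snoc_last, Fin.snoc_castSucc]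
          exact hz2'm.1.2 i
        | cast j => simpa using hqq i j
    · intro i
      induction i using Fin.lastCases with
      | last => simpa using hz1m.2.1
      | cast i => simpa using hup i
    · intro i
      induction i using Fin.lastCases with
      | last => simpa using hz2'm.2.1
      | cast i => simpa using huq i
    · intro i
      induction i using Fin.lastCases with
      | last => simpa using hz1m.2.2
      | cast i => simpa using hvp i
    · intro i
      induction i using Fin.lastCases with
      | last => simpa using hz2'm.2.2
      | cast i => simpa using hvq i


section Eval

variable {V : Type*} [AddCommGroup V] [Module ℝ V]

lemma eval_mixed (ω α : V [⋀^Fin 2]→ₗ[ℝ] ℝ) (k : ℕ) (u w : V) (p q : Fin k → V)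
    (hfam : IsSympFam (altBilin ω) u w p q) (huw : ω ![u, w] = 0) :
    wedgeRaw 2 (2 * k) ⇑α (wpow ⇑ω k)
      (fun j => (fun x : Fin (k + 1) × Fin 2 =>
        if x.2 = 0 then Fin.cons (α := fun _ => V) u p x.1 else Fin.cons (α := fun _ => V) w q x.1)
          ((pairEquiv (k + 1) (2 + 2 * k) (two_mul_succ k)).symm j))
      = (k.factorial : ℝ) * α ![u, w] := by
  classical
  obtain ⟨hpq1, hpq0, hpp, hqq, hup, huq, hvp, hvq⟩ := hfam
  simp only [altBilin_apply] at hpq1 hpq0 hpp hqq hup huq hvp hvq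
  set dd : Fin (k + 1) × Fin 2 → V := fun x =>
    if x.2 = 0 then Fin.cons (α := fun _ => V) u p x.1 else Fin.cons (α := fun _ => V) w q x.1 with hdd
  set qE := pairEquiv (k + 1) (2 + 2 * k) (two_mul_succ k) with hqE
  have hone : ¬ ((1 : Fin 2) = 0) := by decide
  have hd00 : dd (0, 0) = u := by simp [hdd]
  have hd01 : dd (0, 1) = w := by simp [hdd, hone]
  have hdp : ∀ j : Fin k, dd (j.succ, 0) = p j := by intro j; simp [hdd]
  have hdq : ∀ j : Fin k, dd (j.succ, 1) = q j := by intro j; simp [hdd, hone]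
  have hrow : ∀ z : V, z = u ∨ z = w → ∀ y : Fin (k + 1) × Fin 2, ω ![z, dd y] = 0 := by
    rintro z hz ⟨y1, y2⟩
    induction y1 using Fin.cases with
    | zero =>
      rcases (show y2 = 0 ∨ y2 = 1 by omega) with rfl | rfl
      · rw [hd00]
        rcases hz with rfl | rfl
        · exact alt_self ω z
        · rw [alt_swap, huw]; ring
      · rw [hd01]
        rcases hz with rfl | rfl
        · exact huw
        · exact alt_self ω z
    | succ j =>
      rcases (show y2 = 0 ∨ y2 = 1 by omega) with rfl | rfl
      · rw [hdp]
        rcases hz with rfl | rfl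
        · exact hup j
        · exact hvp j
      · rw [hdq]
        rcases hz with rfl | rfl
        · exact huq j
        · exact hvq j
  have hzero : ∀ x y : Fin (k + 1) × Fin 2, x.1 = 0 ∨ y.1 = 0 → ω ![dd x, dd y] = 0 := by
    have hddz : ∀ x : Fin (k + 1) × Fin 2, x.1 = 0 → dd x = u ∨ dd x = w := by
      rintro ⟨x1, x2⟩ hx1
      simp only at hx1
      subst hx1
      rcases (show x2 = 0 ∨ x2 = 1 by omega) with rfl | rfl
      · exact Or.inl hd00
      · exact Or.inr hd01
    rintro x y (hx | hy)
    · obtain hu' | hw' := hddz x hx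
      · rw [hu']; exact hrow u (Or.inl rfl) y
      · rw [hw']; exact hrow w (Or.inr rfl) y
    · obtain hu' | hw' := hddz y hy
      · rw [hu', alt_swap, hrow u (Or.inl rfl) x]; ring
      · rw [hw', alt_swap, hrow w (Or.inr rfl) x]; ring
  have hoffM : ∀ x y : Fin (k + 1) × Fin 2, x.1 ≠ y.1 → ω ![dd x, dd y] = 0 := by
    rintro ⟨x1, x2⟩ ⟨y1, y2⟩ hxy
    simp only at hxy
    induction x1 using Fin.cases with
    | zero => exact hzero _ _ (Or.inl rfl)
    | succ i =>
      induction y1 using Fin.cases with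
      | zero => exact hzero _ _ (Or.inr rfl)
      | succ j =>
        have hij : i ≠ j := fun h => hxy (by rw [h])
        rcases (show x2 = 0 ∨ x2 = 1 by omega) with rfl | rfl <;>
          rcases (show y2 = 0 ∨ y2 = 1 by omega) with rfl | rfl
        · rw [hdp, hdp]; exact hpp i j
        · rw [hdp, hdq]; exact hpq0 i j hij
        · rw [hdq, hdp, alt_swap, hpq0 j i (Ne.symm hij)]; ring
        · rw [hdq, hdq]; exact hqq i j
  have hA : (fun x y => α ![dd x, dd y]) ((0 : Fin (k + 1)), (1 : Fin 2)) (0, 0)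
      = -(fun x y => α ![dd x, dd y]) (0, 0) (0, 1) := by
    simp only [hd00, hd01]
    exact alt_swap α u w
  have h01 : ∀ i : Fin k, (fun x y => ω ![dd x, dd y]) (i.succ, 0) (i.succ, 1) = 1 := by
    intro i; simp only [hdp, hdq]; exact hpq1 i
  have h10 : ∀ i : Fin k, (fun x y => ω ![dd x, dd y]) (i.succ, 1) (i.succ, 0) = -1 := by
    intro i; simp only [hdp, hdq]
    rw [alt_swap, hpq1 i]
  rw [wedge2_eq_sum]
  beta_reduce
  rw [← Equiv.sum_comp (Equiv.permCongr qE)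
    (fun ρ : Equiv.Perm (Fin (2 + 2 * k)) => ((Equiv.Perm.sign ρ : ℤ) : ℝ) *
      (α ![dd (qE.symm (ρ (qE (0, 0)))), dd (qE.symm (ρ (qE (0, 1))))] *
       ∏ i : Fin k, ω ![dd (qE.symm (ρ (qE (i.succ, 0)))),
         dd (qE.symm (ρ (qE (i.succ, 1))))]))]
  simp only [Equiv.permCongr_apply, Equiv.symm_apply_apply, Equiv.Perm.sign_permCongr]
  have hfinal : (∑ ψ : Equiv.Perm (Fin (k + 1) × Fin 2), ((Equiv.Perm.sign ψ : ℤ) : ℝ) *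
      (α ![dd (ψ (0, 0)), dd (ψ (0, 1))] *
       ∏ i : Fin k, ω ![dd (ψ (i.succ, 0)), dd (ψ (i.succ, 1))]))
      = 2 ^ (k + 1) * (k.factorial : ℝ) * α ![u, w] := by
    have hmix := sum_pairs_mixed (fun x y => α ![dd x, dd y]) (fun x y => ω ![dd x, dd y])
      hA hzero h01 h10 hoffM
    beta_reduce at hmix
    rw [hd00, hd01] at hmix
    exact hmix
  rw [hfinal]
  have h2 : (2 : ℝ) ^ (k + 1) ≠ 0 := by positivity
  field_simp

lemma eval_pure (ω α : V [⋀^Fin 2]→ₗ[ℝ] ℝ) (k : ℕ) (c : ℝ)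
    (hc : ∀ g : Fin 2 → V, α g = c * ω g)
    (p q : Fin (k + 1) → V) (hfam : IsSympFam (altBilin ω) 0 0 p q) :
    wedgeRaw 2 (2 * k) ⇑α (wpow ⇑ω k)
      (fun j => (fun x : Fin (k + 1) × Fin 2 => if x.2 = 0 then p x.1 else q x.1)
        ((pairEquiv (k + 1) (2 + 2 * k) (two_mul_succ k)).symm j))
      = c * (((k + 1).factorial : ℕ) : ℝ) := by
  classical
  obtain ⟨hpq1, hpq0, hpp, hqq, _, _, _, _⟩ := hfam
  simp only [altBilin_apply] at hpq1 hpq0 hpp hqq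
  set dd : Fin (k + 1) × Fin 2 → V := fun x => if x.2 = 0 then p x.1 else q x.1 with hdd
  set qE := pairEquiv (k + 1) (2 + 2 * k) (two_mul_succ k) with hqE
  have hone : ¬ ((1 : Fin 2) = 0) := by decide
  have hdp : ∀ j, dd (j, 0) = p j := by intro j; simp [hdd]
  have hdq : ∀ j, dd (j, 1) = q j := by intro j; simp [hdd, hone]
  have h01 : ∀ i : Fin (k + 1), (fun x y => ω ![dd x, dd y]) (i, 0) (i, 1) = 1 := by
    intro i; simp only [hdp, hdq]; exact hpq1 i
  have h10 : ∀ i : Fin (k + 1), (fun x y => ω ![dd x, dd y]) (i, 1) (i, 0) = -1 := by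
    intro i; simp only [hdp, hdq]
    rw [alt_swap, hpq1 i]
  have hoffM : ∀ x y : Fin (k + 1) × Fin 2, x.1 ≠ y.1 → ω ![dd x, dd y] = 0 := by
    rintro ⟨x1, x2⟩ ⟨y1, y2⟩ hxy
    simp only at hxy
    rcases (show x2 = 0 ∨ x2 = 1 by omega) with rfl | rfl <;>
      rcases (show y2 = 0 ∨ y2 = 1 by omega) with rfl | rfl
    · rw [hdp, hdp]; exact hpp x1 y1
    · rw [hdp, hdq]; exact hpq0 x1 y1 hxy
    · rw [hdq, hdp, alt_swap, hpq0 y1 x1 (Ne.symm hxy)]; ring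
    · rw [hdq, hdq]; exact hqq x1 y1
  rw [wedge2_eq_sum]
  beta_reduce
  rw [← Equiv.sum_comp (Equiv.permCongr qE)
    (fun ρ : Equiv.Perm (Fin (2 + 2 * k)) => ((Equiv.Perm.sign ρ : ℤ) : ℝ) *
      (α ![dd (qE.symm (ρ (qE (0, 0)))), dd (qE.symm (ρ (qE (0, 1))))] *
       ∏ i : Fin k, ω ![dd (qE.symm (ρ (qE (i.succ, 0)))),
         dd (qE.symm (ρ (qE (i.succ, 1))))]))]
  simp only [Equiv.permCongr_apply, Equiv.symm_apply_apply, Equiv.Perm.sign_permCongr]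
  have hfinal : (∑ ψ : Equiv.Perm (Fin (k + 1) × Fin 2), ((Equiv.Perm.sign ψ : ℤ) : ℝ) *
      (α ![dd (ψ (0, 0)), dd (ψ (0, 1))] *
       ∏ i : Fin k, ω ![dd (ψ (i.succ, 0)), dd (ψ (i.succ, 1))]))
      = c * (2 ^ (k + 1) * (((k + 1).factorial : ℕ) : ℝ)) := by
    have hsplit : ∀ ψ : Equiv.Perm (Fin (k + 1) × Fin 2),
        ((Equiv.Perm.sign ψ : ℤ) : ℝ) *
          (α ![dd (ψ (0, 0)), dd (ψ (0, 1))] *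
           ∏ i : Fin k, ω ![dd (ψ (i.succ, 0)), dd (ψ (i.succ, 1))])
        = c * (((Equiv.Perm.sign ψ : ℤ) : ℝ) *
            ∏ i : Fin (k + 1), ω ![dd (ψ (i, 0)), dd (ψ (i, 1))]) := by
      intro ψ
      rw [hc ![dd (ψ (0, 0)), dd (ψ (0, 1))]]
      rw [Fin.prod_univ_succ (f := fun i : Fin (k + 1) => ω ![dd (ψ (i, 0)), dd (ψ (i, 1))])]
      ring
    rw [Finset.sum_congr rfl (fun ψ _ => hsplit ψ), ← Finset.mul_sum]
    congr 1
    have hpure := sum_pairs (m := k + 1) (fun x y => ω ![dd x, dd y]) h01 h10 hoffM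
    beta_reduce at hpure
    exact hpure
  rw [hfinal]
  have h2 : (2 : ℝ) ^ (k + 1) ≠ 0 := by positivity
  field_simp

lemma exists_const (ω α : V [⋀^Fin 2]→ₗ[ℝ] ℝ) (hne : ∃ u : V, u ≠ 0)
    (hnd : ∀ u : V, (∀ w : V, ω ![u, w] = 0) → u = 0)
    (h0 : ∀ u w : V, ω ![u, w] = 0 → α ![u, w] = 0) :
    ∃ c : ℝ, ∀ u w : V, α ![u, w] = c * ω ![u, w] := by
  set B := altBilin ω with hB
  set A := altBilin α with hA
  have hanti : ∀ x y : V, B y x = -B x y := altB_anti ω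
  have hantiA : ∀ x y : V, A y x = -A x y := altB_anti α
  have h0' : ∀ x y : V, B x y = 0 → A x y = 0 := fun x y h => h0 x y h
  have hex : ∀ u : V, u ≠ 0 → ∃ w, B u w = 1 := by
    intro u hu
    have h1 : ¬∀ w : V, B u w = 0 := fun h => hu (hnd u fun w => h w)
    push_neg at h1
    obtain ⟨w, hw⟩ := h1
    exact ⟨(B u w)⁻¹ • w, by rw [map_smul, smul_eq_mul]; exact inv_mul_cancel₀ hw⟩
  have case1 : ∀ u u' w w' : V, B u u' ≠ 0 → B u w = 1 → B u' w' = 1 → A u w = A u' w' := by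
    intro u u' w w' hs hw hw'
    have e1 : B u (w - (B u u')⁻¹ • u') = 0 := by
      rw [map_sub, map_smul, hw, smul_eq_mul, inv_mul_cancel₀ hs]; ring
    have e2 : A u w = (B u u')⁻¹ * A u u' := by
      have h := h0' _ _ e1
      rw [map_sub, map_smul, smul_eq_mul] at h
      linarith
    have e3 : B u' (w' + (B u u')⁻¹ • u) = 0 := by
      rw [map_add, map_smul, hw', smul_eq_mul, hanti u u', mul_neg, inv_mul_cancel₀ hs]; ring
    have e4 : A u' w' = (B u u')⁻¹ * A u u' := by
      have h := h0' _ _ e3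
      rw [map_add, map_smul, smul_eq_mul, hantiA u u'] at h
      linarith
    rw [e2, e4]
  have two_func : ∀ u u' : V, u ≠ 0 → u' ≠ 0 → ∃ z, B u z ≠ 0 ∧ B u' z ≠ 0 := by
    intro u u' hu hu'
    obtain ⟨w1, hw1⟩ := hex u hu
    obtain ⟨w2, hw2⟩ := hex u' hu'
    by_cases h1 : B u' w1 = 0
    · by_cases h2 : B u w2 = 0
      · refine ⟨w1 + w2, ?_, ?_⟩
        · rw [map_add, hw1, h2]; norm_num
        · rw [map_add, hw2, h1]; norm_num
      · exact ⟨w2, h2, by rw [hw2]; norm_num⟩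
    · exact ⟨w1, by rw [hw1]; norm_num, h1⟩
  have claim3 : ∀ u u' w w' : V, u ≠ 0 → u' ≠ 0 → B u w = 1 → B u' w' = 1 →
      A u w = A u' w' := by
    intro u u' w w' hu hu' hw hw'
    by_cases hs : B u u' = 0
    · obtain ⟨z, hz1, hz2⟩ := two_func u u' hu hu'
      have hzne : z ≠ 0 := by
        rintro rfl
        rw [map_zero] at hz1
        exact hz1 rfl
      obtain ⟨wz, hwz⟩ := hex z hzne
      rw [case1 u z w wz hz1 hw hwz, ← case1 u' z w' wz hz2 hw' hwz]
    · exact case1 u u' w w' hs hw hw'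
  obtain ⟨u0, hu0⟩ := hne
  obtain ⟨w0, hw0⟩ := hex u0 hu0
  refine ⟨A u0 w0, ?_⟩
  intro u w
  show A u w = A u0 w0 * B u w
  by_cases hB0 : B u w = 0
  · rw [h0' u w hB0, hB0, mul_zero]
  · have hu : u ≠ 0 := by
      rintro rfl
      apply hB0
      rw [show B (0 : V) = 0 from map_zero B]
      rfl
    have h1 : B u ((B u w)⁻¹ • w) = 1 := by rw [map_smul, smul_eq_mul, inv_mul_cancel₀ hB0]
    have h2 : A u ((B u w)⁻¹ • w) = A u0 w0 := claim3 u u0 _ w0 hu hu0 h1 hw0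
    rw [map_smul, smul_eq_mul] at h2
    field_simp at h2
    linarith [h2]

end Eval

end TFA

/-- For `n > 2` and `1 ≤ k ≤ n - 2`, a 2-form `α` satisfies `α ∧ ω^k = 0`
iff `α = 0`. -/
theorem two_form_wedge_power_eq_zero_iff
    {V : Type*} [AddCommGroup V] [Module ℝ V]
    (n : ℕ) (hn : 2 < n) (hdim : Module.finrank ℝ V = 2 * n)
    (ω : V [⋀^Fin 2]→ₗ[ℝ] ℝ)
    (hnd : ∀ u : V, (∀ w : V, ω ![u, w] = 0) → u = 0)
    (k : ℕ) (hk : 1 ≤ k) (hkn : k ≤ n - 2)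
    (α : V [⋀^Fin 2]→ₗ[ℝ] ℝ) :
    (∀ v : Fin (2 + 2 * k) → V, wedgeRaw 2 (2 * k) ⇑α (wpow ⇑ω k) v = 0) ↔ α = 0 := by
  constructor
  · intro H
    have hFD : FiniteDimensional ℝ V := FiniteDimensional.of_finrank_pos (by rw [hdim]; omega)
    have hiso : ∀ u w : V, ω ![u, w] = 0 → α ![u, w] = 0 := by
      intro u w huw
      obtain ⟨p, q, hfam⟩ := TFA.exists_sympFam n (by omega) hdim ω hnd u w k
        (Or.inl (by omega))
      have h0 := TFA.eval_mixed ω α k u w p q hfam huw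
      rw [H] at h0
      have hk : (k.factorial : ℝ) ≠ 0 := by exact_mod_cast Nat.factorial_ne_zero k
      rcases mul_eq_zero.1 h0.symm with h | h
      · exact absurd h hk
      · exact h
    have hnt : Nontrivial V := Module.nontrivial_of_finrank_pos (R := ℝ) (by rw [hdim]; omega)
    obtain ⟨c, hc⟩ := TFA.exists_const ω α (exists_ne 0) hnd hiso
    have hcraw : ∀ g : Fin 2 → V, α g = c * ω g := by
      intro g
      have h1 := hc (g 0) (g 1)
      rwa [TFA.fin2_eta g] at h1
    have hc0 : c = 0 := by
      obtain ⟨p', q', hfam'⟩ := TFA.exists_sympFam n (by omega) hdim ω hnd 0 0 (k + 1)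
        (Or.inr ⟨rfl, rfl, by omega⟩)
      have h1 := TFA.eval_pure ω α k c hcraw p' q' hfam'
      rw [H] at h1
      have hkk : (((k + 1).factorial : ℕ) : ℝ) ≠ 0 := by
        exact_mod_cast Nat.factorial_ne_zero (k + 1)
      rcases mul_eq_zero.1 h1.symm with h | h
      · exact h
      · exact absurd h hkk
    apply AlternatingMap.ext
    intro g
    rw [hcraw g, hc0, zero_mul]
    simp
  · rintro rfl v
    simp [wedgeRaw]

end
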